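/- Under the hypotheses of the previous statement (purified oracles U_p, U_q for probability distributions p, q on [n], copy unitary U_copy, Ũ_p, Ũ_q, U := (I ⊗ H₂)(Ũ_p ⊗ |0⟩⟨0| + Ũ_q ⊗ |1⟩⟨1|)(I ⊗ (H₂ ∘ X)), and ψ := U(a₀ ⊗ e₁ ⊗ e₁ ⊗ |0⟩)), let Π' be the orthogonal projection of A ⊗ ℂⁿ ⊗ ℂⁿ ⊗ ℂ² onto the subspace (ℂ·a₀) ⊗ (ℂ·e₁) ⊗ ℂⁿ ⊗ (ℂ·|0⟩). Then ‖Π' ψ‖² = ¼ · Σ_{i∈[n]} (p_i − q_i)² = ‖p − q‖₂² / 4. -/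

import Mathlib

open scoped ComplexInnerProductSpace

/-- The tensor product of two vectors of Euclidean spaces, realized concretely:
`(tp f g) (a, b) = f a * g b`.  This realizes `EuclideanSpace ℂ (α × β)` as the
tensor product with the induced inner product. -/
noncomputable def tp {α β : Type*} (f : EuclideanSpace ℂ α) (g : EuclideanSpace ℂ β) :
    EuclideanSpace ℂ (α × β) := WithLp.toLp 2 (fun x => f x.1 * g x.2)

/-- Tensor of a vector of `EuclideanSpace ℂ α` with a vector of
`EuclideanSpace ℂ (β × γ)`, placed in `EuclideanSpace ℂ ((α × β) × γ)`. -/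
noncomputable def tpL {α β γ : Type*} (a : EuclideanSpace ℂ α) (z : EuclideanSpace ℂ (β × γ)) :
    EuclideanSpace ℂ ((α × β) × γ) := WithLp.toLp 2 (fun x => a x.1.1 * z (x.1.2, x.2))

/-- The standard orthonormal basis vector `e_i` of `ℂⁿ`. -/
noncomputable def eb {n : ℕ} (i : Fin n) : EuclideanSpace ℂ (Fin n) :=
  EuclideanSpace.single i 1

/-- The standard orthonormal basis vectors `|0⟩, |1⟩` of `ℂ²`. -/
noncomputable def qb (j : Fin 2) : EuclideanSpace ℂ (Fin 2) :=
  EuclideanSpace.single j 1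

section Aux
open scoped ComplexInnerProductSpace

variable {n : ℕ} {ι : Type*} [Fintype ι] [DecidableEq ι]

lemma inner_tp' {α β : Type*} [Fintype α] [Fintype β]
    (f f' : EuclideanSpace ℂ α) (g g' : EuclideanSpace ℂ β) :
    ⟪tp f g, tp f' g'⟫ = ⟪f, f'⟫ * ⟪g, g'⟫ := by
  simp only [PiLp.inner_apply, RCLike.inner_apply, tp]
  rw [Fintype.sum_prod_type, Finset.sum_mul_sum]
  refine Finset.sum_congr rfl fun a _ => Finset.sum_congr rfl fun b _ => ?_
  simp only [map_mul]; ring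

lemma tp_smul_left {α β : Type*} (c : ℂ) (f : EuclideanSpace ℂ α) (g : EuclideanSpace ℂ β) :
    tp (c • f) g = c • tp f g := by
  ext x; simp [tp, mul_assoc]

lemma tp_smul_right {α β : Type*} (c : ℂ) (f : EuclideanSpace ℂ α) (g : EuclideanSpace ℂ β) :
    tp f (c • g) = c • tp f g := by
  ext x; simp [tp]; ring

lemma tp_add_right {α β : Type*} (f : EuclideanSpace ℂ α) (g g' : EuclideanSpace ℂ β) :
    tp f (g + g') = tp f g + tp f g' := by
  ext x; simp [tp, mul_add]

lemma tp_sub_right {α β : Type*} (f : EuclideanSpace ℂ α) (g g' : EuclideanSpace ℂ β) :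
    tp f (g - g') = tp f g - tp f g' := by
  ext x; simp [tp, mul_sub]

lemma tp_sum_left {α β κ : Type*} (s : Finset κ) (f : κ → EuclideanSpace ℂ α)
    (g : EuclideanSpace ℂ β) : tp (∑ k ∈ s, f k) g = ∑ k ∈ s, tp (f k) g := by
  ext x
  have h1 : (∑ k ∈ s, tp (f k) g) x = ∑ k ∈ s, tp (f k) g x := by
    rw [WithLp.ofLp_sum, Finset.sum_apply]
  have h2 : (∑ k ∈ s, f k) x.1 = ∑ k ∈ s, f k x.1 := by
    rw [WithLp.ofLp_sum, Finset.sum_apply]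
  show (∑ k ∈ s, f k) x.1 * g x.2 = (∑ k ∈ s, tp (f k) g) x
  rw [h1, h2, Finset.sum_mul]
  rfl

lemma tp_tpL {α β γ : Type*} (a : EuclideanSpace ℂ α) (b : EuclideanSpace ℂ β)
    (c : EuclideanSpace ℂ γ) : tp (tp a b) c = tpL a (tp b c) := by
  ext x; simp [tp, tpL, mul_assoc]

lemma inner_eb {n : ℕ} (i j : Fin n) : ⟪eb i, eb j⟫ = if i = j then 1 else 0 := by
  simp [eb, EuclideanSpace.inner_single_left, EuclideanSpace.single_apply, eq_comm]

lemma inner_qb (i j : Fin 2) : ⟪qb i, qb j⟫ = if i = j then 1 else 0 := by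
  simp [qb, EuclideanSpace.inner_single_left, EuclideanSpace.single_apply, eq_comm]

/-- Computation of `Ũ_p (a₀ ⊗ e₁ ⊗ e₁)`. -/
lemma tilde_apply (a₀ : EuclideanSpace ℂ ι) (φ : Fin n → EuclideanSpace ℂ ι)
    (p : Fin n → ℝ) (e₁ : EuclideanSpace ℂ (Fin n))
    (Up : EuclideanSpace ℂ (ι × Fin n) ≃ₗᵢ[ℂ] EuclideanSpace ℂ (ι × Fin n))
    (hUp : Up (tp a₀ e₁) = ∑ i, (Real.sqrt (p i) : ℂ) • tp (φ i) (eb i))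
    (Ucopy : EuclideanSpace ℂ (Fin n × Fin n) ≃ₗᵢ[ℂ] EuclideanSpace ℂ (Fin n × Fin n))
    (hUcopy : ∀ i : Fin n, Ucopy (tp (eb i) e₁) = tp (eb i) (eb i))
    (UpI : EuclideanSpace ℂ ((ι × Fin n) × Fin n) ≃ₗᵢ[ℂ] EuclideanSpace ℂ ((ι × Fin n) × Fin n))
    (hUpI : ∀ (z : EuclideanSpace ℂ (ι × Fin n)) (c : EuclideanSpace ℂ (Fin n)),
      UpI (tp z c) = tp (Up z) c)
    (IUcopy : EuclideanSpace ℂ ((ι × Fin n) × Fin n) ≃ₗᵢ[ℂ]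
      EuclideanSpace ℂ ((ι × Fin n) × Fin n))
    (hIUcopy : ∀ (a : EuclideanSpace ℂ ι) (z : EuclideanSpace ℂ (Fin n × Fin n)),
      IUcopy (tpL a z) = tpL a (Ucopy z))
    (UpdI : EuclideanSpace ℂ ((ι × Fin n) × Fin n) ≃ₗᵢ[ℂ] EuclideanSpace ℂ ((ι × Fin n) × Fin n))
    (hUpdI : ∀ (z : EuclideanSpace ℂ (ι × Fin n)) (c : EuclideanSpace ℂ (Fin n)),
      UpdI (tp z c) = tp (Up.symm z) c) :
    UpdI (IUcopy (UpI (tp (tp a₀ e₁) e₁)))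
      = ∑ i, (Real.sqrt (p i) : ℂ) • tp (Up.symm (tp (φ i) (eb i))) (eb i) := by
  rw [hUpI, hUp, tp_sum_left]
  simp only [tp_smul_left, map_sum, map_smul]
  refine Finset.sum_congr rfl fun i _ => ?_
  congr 1
  rw [tp_tpL, hIUcopy, hUcopy, ← tp_tpL, hUpdI]

/-- `⟨a₀ ⊗ e₁ ⊗ e_k, Ũ_p (a₀ ⊗ e₁ ⊗ e₁)⟩ = p k`. -/
lemma inner_tilde (a₀ : EuclideanSpace ℂ ι) (φ : Fin n → EuclideanSpace ℂ ι)
    (hφ : Orthonormal ℂ φ) (p : Fin n → ℝ) (hp0 : ∀ i, 0 ≤ p i)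
    (e₁ : EuclideanSpace ℂ (Fin n))
    (Up : EuclideanSpace ℂ (ι × Fin n) ≃ₗᵢ[ℂ] EuclideanSpace ℂ (ι × Fin n))
    (hUp : Up (tp a₀ e₁) = ∑ i, (Real.sqrt (p i) : ℂ) • tp (φ i) (eb i))
    (k : Fin n) :
    ⟪tp (tp a₀ e₁) (eb k),
      ∑ i, (Real.sqrt (p i) : ℂ) • tp (Up.symm (tp (φ i) (eb i))) (eb i)⟫ = (p k : ℂ) := by
  have hsym : ∀ x, ⟪tp a₀ e₁, Up.symm x⟫ = ⟪Up (tp a₀ e₁), x⟫ := fun x => by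
    rw [← LinearIsometryEquiv.inner_map_map Up, LinearIsometryEquiv.apply_symm_apply]
  simp only [inner_sum, inner_smul_right, inner_tp', inner_eb, mul_ite, mul_one, mul_zero,
    Finset.sum_ite_eq, Finset.sum_ite_eq', Finset.mem_univ, if_true]
  rw [hsym, hUp, sum_inner]
  simp only [inner_smul_left, inner_tp', inner_eb, orthonormal_iff_ite.mp hφ, mul_ite, mul_one,
    mul_zero, ite_mul, zero_mul, Finset.sum_ite_eq, Finset.sum_ite_eq', Finset.mem_univ, if_true,
    Complex.conj_ofReal]
  rw [← Complex.ofReal_mul, Real.mul_self_sqrt (hp0 k)]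

end Aux
/-- Purified quantum query-access oracles `U_p`, `U_q` for probability
distributions `p`, `q` on `[n]`, the copy unitary `U_copy`, the induced unitaries
`Ũ_p = (U_p† ⊗ I)(I ⊗ U_copy)(U_p ⊗ I)` and `Ũ_q` on `A ⊗ ℂⁿ ⊗ ℂⁿ` (given through their
factors `U_p ⊗ I = UpI`, `I ⊗ U_copy = IUcopy`, `U_p† ⊗ I = UpdI`, etc.), the controlled
unitary `CU = Ũ_p ⊗ |0⟩⟨0| + Ũ_q ⊗ |1⟩⟨1|`, and `U := (I ⊗ H₂) ∘ CU ∘ (I ⊗ (H₂ ∘ X))` on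
`(A ⊗ ℂⁿ ⊗ ℂⁿ) ⊗ ℂ²`.  With `ψ := U (a₀ ⊗ e₁ ⊗ e₁ ⊗ |0⟩)` and `Π'` the
orthogonal projection onto `(ℂ·a₀) ⊗ (ℂ·e₁) ⊗ ℂⁿ ⊗ (ℂ·|0⟩)` (the span of the orthonormal
family `(a₀ ⊗ e₁ ⊗ e_k ⊗ |0⟩)_k`), we have `‖Π' ψ‖² = ¼ ∑ i, (p i − q i)² = ‖p − q‖₂²/4`. -/
theorem stmt6 {n : ℕ} (hn : 1 ≤ n) {ι : Type*} [Fintype ι] [DecidableEq ι]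
    (a₀ : EuclideanSpace ℂ ι) (ha₀ : ‖a₀‖ = 1)
    (φ χ : Fin n → EuclideanSpace ℂ ι) (hφ : Orthonormal ℂ φ) (hχ : Orthonormal ℂ χ)
    (p q : Fin n → ℝ) (hp0 : ∀ i, 0 ≤ p i) (hp1 : ∑ i, p i = 1)
    (hq0 : ∀ i, 0 ≤ q i) (hq1 : ∑ i, q i = 1)
    (e₁ : EuclideanSpace ℂ (Fin n)) (he₁ : e₁ = eb ⟨0, hn⟩)
    -- the purified quantum query-access oracles for `p` and `q`:
    (Up Uq : EuclideanSpace ℂ (ι × Fin n) ≃ₗᵢ[ℂ] EuclideanSpace ℂ (ι × Fin n))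
    (hUp : Up (tp a₀ e₁) = ∑ i, (Real.sqrt (p i) : ℂ) • tp (φ i) (eb i))
    (hUq : Uq (tp a₀ e₁) = ∑ i, (Real.sqrt (q i) : ℂ) • tp (χ i) (eb i))
    -- the copy unitary:
    (Ucopy : EuclideanSpace ℂ (Fin n × Fin n) ≃ₗᵢ[ℂ] EuclideanSpace ℂ (Fin n × Fin n))
    (hUcopy : ∀ i : Fin n, Ucopy (tp (eb i) e₁) = tp (eb i) (eb i))
    -- `UpI = U_p ⊗ I`, `UqI = U_q ⊗ I` on `A ⊗ ℂⁿ ⊗ ℂⁿ`: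
    (UpI UqI : EuclideanSpace ℂ ((ι × Fin n) × Fin n) ≃ₗᵢ[ℂ]
      EuclideanSpace ℂ ((ι × Fin n) × Fin n))
    (hUpI : ∀ (z : EuclideanSpace ℂ (ι × Fin n)) (c : EuclideanSpace ℂ (Fin n)),
      UpI (tp z c) = tp (Up z) c)
    (hUqI : ∀ (z : EuclideanSpace ℂ (ι × Fin n)) (c : EuclideanSpace ℂ (Fin n)),
      UqI (tp z c) = tp (Uq z) c)
    -- `IUcopy = I ⊗ U_copy` on `A ⊗ ℂⁿ ⊗ ℂⁿ`:
    (IUcopy : EuclideanSpace ℂ ((ι × Fin n) × Fin n) ≃ₗᵢ[ℂ]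
      EuclideanSpace ℂ ((ι × Fin n) × Fin n))
    (hIUcopy : ∀ (a : EuclideanSpace ℂ ι) (z : EuclideanSpace ℂ (Fin n × Fin n)),
      IUcopy (tpL a z) = tpL a (Ucopy z))
    -- `UpdI = U_p† ⊗ I`, `UqdI = U_q† ⊗ I` on `A ⊗ ℂⁿ ⊗ ℂⁿ`:
    (UpdI UqdI : EuclideanSpace ℂ ((ι × Fin n) × Fin n) ≃ₗᵢ[ℂ]
      EuclideanSpace ℂ ((ι × Fin n) × Fin n))
    (hUpdI : ∀ (z : EuclideanSpace ℂ (ι × Fin n)) (c : EuclideanSpace ℂ (Fin n)),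
      UpdI (tp z c) = tp (Up.symm z) c)
    (hUqdI : ∀ (z : EuclideanSpace ℂ (ι × Fin n)) (c : EuclideanSpace ℂ (Fin n)),
      UqdI (tp z c) = tp (Uq.symm z) c)
    -- the Hadamard and Pauli-X gates on ℂ²:
    (Had : EuclideanSpace ℂ (Fin 2) ≃ₗᵢ[ℂ] EuclideanSpace ℂ (Fin 2))
    (hHad0 : Had (qb 0) = ((Real.sqrt 2 : ℂ))⁻¹ • (qb 0 + qb 1))
    (hHad1 : Had (qb 1) = ((Real.sqrt 2 : ℂ))⁻¹ • (qb 0 - qb 1))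
    (Xg : EuclideanSpace ℂ (Fin 2) ≃ₗᵢ[ℂ] EuclideanSpace ℂ (Fin 2))
    (hXg0 : Xg (qb 0) = qb 1) (hXg1 : Xg (qb 1) = qb 0)
    -- the controlled unitary `CU = Ũ_p ⊗ |0⟩⟨0| + Ũ_q ⊗ |1⟩⟨1|`:
    (CU : EuclideanSpace ℂ (((ι × Fin n) × Fin n) × Fin 2) ≃ₗᵢ[ℂ]
      EuclideanSpace ℂ (((ι × Fin n) × Fin n) × Fin 2))
    (hCU0 : ∀ z : EuclideanSpace ℂ ((ι × Fin n) × Fin n),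
      CU (tp z (qb 0)) = tp (UpdI (IUcopy (UpI z))) (qb 0))
    (hCU1 : ∀ z : EuclideanSpace ℂ ((ι × Fin n) × Fin n),
      CU (tp z (qb 1)) = tp (UqdI (IUcopy (UqI z))) (qb 1))
    -- `IH = I ⊗ Had` and `IHX = I ⊗ (Had ∘ X)` on `(A ⊗ ℂⁿ ⊗ ℂⁿ) ⊗ ℂ²`:
    (IH : EuclideanSpace ℂ (((ι × Fin n) × Fin n) × Fin 2) ≃ₗᵢ[ℂ]
      EuclideanSpace ℂ (((ι × Fin n) × Fin n) × Fin 2))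
    (hIH : ∀ (z : EuclideanSpace ℂ ((ι × Fin n) × Fin n)) (s : EuclideanSpace ℂ (Fin 2)),
      IH (tp z s) = tp z (Had s))
    (IHX : EuclideanSpace ℂ (((ι × Fin n) × Fin n) × Fin 2) ≃ₗᵢ[ℂ]
      EuclideanSpace ℂ (((ι × Fin n) × Fin n) × Fin 2))
    (hIHX : ∀ (z : EuclideanSpace ℂ ((ι × Fin n) × Fin n)) (s : EuclideanSpace ℂ (Fin 2)),
      IHX (tp z s) = tp z (Had (Xg s)))
    -- `ψ := U (a₀ ⊗ e₁ ⊗ e₁ ⊗ |0⟩)` where `U = IH ∘ CU ∘ IHX`: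
    (ψ : EuclideanSpace ℂ (((ι × Fin n) × Fin n) × Fin 2))
    (hψ : ψ = IH (CU (IHX (tp (tp (tp a₀ e₁) e₁) (qb 0))))) :
    -- `Π'` is the orthogonal projection onto `(ℂ·a₀) ⊗ (ℂ·e₁) ⊗ ℂⁿ ⊗ (ℂ·|0⟩)`, i.e. onto the
    -- span of the orthonormal family `(a₀ ⊗ e₁ ⊗ e_k ⊗ |0⟩)_{k ∈ [n]}`; the conclusion reads
    -- `‖Π' ψ‖² = ¼ ∑ᵢ (pᵢ − qᵢ)² = ‖p − q‖₂² / 4`: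
    ‖(Submodule.orthogonalProjectionOnto
        (Submodule.span ℂ (Set.range fun k : Fin n => tp (tp (tp a₀ e₁) (eb k)) (qb 0))) ψ :
      EuclideanSpace ℂ (((ι × Fin n) × Fin n) × Fin 2))‖ ^ 2
        = (1 / 4) * ∑ i, (p i - q i) ^ 2 ∧
      (1 / 4) * ∑ i, (p i - q i) ^ 2 = (Real.sqrt (∑ i, (p i - q i) ^ 2)) ^ 2 / 4 := by
  classical
  set z₃ : EuclideanSpace ℂ ((ι × Fin n) × Fin n) := tp (tp a₀ e₁) e₁ with hz₃
  set w : Fin n → EuclideanSpace ℂ ((ι × Fin n) × Fin n) :=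
    fun k => tp (tp a₀ e₁) (eb k) with hw
  set v : Fin n → EuclideanSpace ℂ (((ι × Fin n) × Fin n) × Fin 2) := fun k => tp (w k) (qb 0) with hv
  set P : EuclideanSpace ℂ ((ι × Fin n) × Fin n) :=
    ∑ i, (Real.sqrt (p i) : ℂ) • tp (Up.symm (tp (φ i) (eb i))) (eb i) with hPdef
  set Q : EuclideanSpace ℂ ((ι × Fin n) × Fin n) :=
    ∑ i, (Real.sqrt (q i) : ℂ) • tp (Uq.symm (tp (χ i) (eb i))) (eb i) with hQdef
  have hP : UpdI (IUcopy (UpI z₃)) = P :=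
    tilde_apply a₀ φ p e₁ Up hUp Ucopy hUcopy UpI hUpI IUcopy hIUcopy UpdI hUpdI
  have hQ : UqdI (IUcopy (UqI z₃)) = Q :=
    tilde_apply a₀ χ q e₁ Uq hUq Ucopy hUcopy UqI hUqI IUcopy hIUcopy UqdI hUqdI
  -- expand ψ
  have hψ2 : ψ = ((Real.sqrt 2 : ℂ))⁻¹ •
      (((Real.sqrt 2 : ℂ))⁻¹ • (tp P (qb 0) + tp P (qb 1))
        - ((Real.sqrt 2 : ℂ))⁻¹ • (tp Q (qb 0) - tp Q (qb 1))) := by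
    rw [hψ, hIHX, hXg0, hHad1, tp_smul_right, tp_sub_right, map_smul, map_sub, hCU0, hCU1, hP, hQ, map_smul, map_sub, hIH, hIH, hHad0, hHad1, tp_smul_right, tp_smul_right,
      tp_add_right, tp_sub_right]
  have hs2 : ((Real.sqrt 2 : ℂ))⁻¹ * ((Real.sqrt 2 : ℂ))⁻¹ = 1 / 2 := by
    rw [← mul_inv, ← Complex.ofReal_mul, Real.mul_self_sqrt (by norm_num : (0:ℝ) ≤ 2)]
    norm_num
  have hq00 : ⟪qb 0, qb 0⟫ = 1 := by rw [inner_qb]; simp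
  have hq01 : ⟪qb 0, qb 1⟫ = 0 := by rw [inner_qb]; simp
  have hwP : ∀ k, ⟪w k, P⟫ = (p k : ℂ) := fun k => inner_tilde a₀ φ hφ p hp0 e₁ Up hUp k
  have hwQ : ∀ k, ⟪w k, Q⟫ = (q k : ℂ) := fun k => inner_tilde a₀ χ hχ q hq0 e₁ Uq hUq k
  set c : Fin n → ℂ := fun k => (((p k - q k) / 2 : ℝ) : ℂ) with hcdef
  have hc : ∀ k, ⟪v k, ψ⟫ = c k := by
    intro k
    rw [hψ2]
    simp only [inner_smul_right, inner_sub_right, inner_add_right, hv, inner_tp', hq00, hq01,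
      mul_one, mul_zero, hwP, hwQ, add_zero, sub_zero]
    rw [mul_sub, ← mul_assoc, ← mul_assoc, hs2, hcdef]
    push_cast
    ring
  -- orthonormality of the family v
  have ha00 : ⟪a₀, a₀⟫ = 1 := by
    rw [inner_self_eq_norm_sq_to_K, ha₀]; norm_num
  have he11 : ⟪e₁, e₁⟫ = 1 := by rw [he₁, inner_eb]; simp
  have hov : Orthonormal ℂ v := by
    rw [orthonormal_iff_ite]
    intro i j
    show ⟪tp (w i) (qb 0), tp (w j) (qb 0)⟫ = _
    rw [inner_tp', hq00, mul_one, hw]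
    show ⟪tp (tp a₀ e₁) (eb i), tp (tp a₀ e₁) (eb j)⟫ = _
    rw [inner_tp', inner_tp', ha00, he11, inner_eb, one_mul, one_mul]
  set K := Submodule.span ℂ (Set.range v) with hK
  have hmem : (∑ k, c k • v k) ∈ K :=
    Submodule.sum_mem _ fun k _ =>
      Submodule.smul_mem _ _ (Submodule.subset_span ⟨k, rfl⟩)
  have hproj : ((Submodule.orthogonalProjectionOnto K ψ :
      EuclideanSpace ℂ (((ι × Fin n) × Fin n) × Fin 2))) = ∑ k, c k • v k := by
    refine Submodule.eq_starProjection_of_mem_of_inner_eq_zero hmem ?_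
    intro y hy
    refine Submodule.span_induction (fun y hy => ?_) (by simp) ?_ ?_ hy
    · obtain ⟨k, rfl⟩ := hy
      rw [inner_sub_left, hov.inner_left_fintype c k, ← inner_conj_symm ψ (v k), hc k, sub_self]
    · intro y z _ _ hy hz
      rw [inner_add_right, hy, hz, add_zero]
    · intro a y _ hy
      rw [inner_smul_right, hy, mul_zero]
  have hnorm : ‖(Submodule.orthogonalProjectionOnto K ψ :
      EuclideanSpace ℂ (((ι × Fin n) × Fin n) × Fin 2))‖ ^ 2 = (1 / 4) * ∑ i, (p i - q i) ^ 2 := by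
    rw [hproj, InnerProductSpace.norm_sq_eq_re_inner (𝕜 := ℂ), hov.inner_sum c c Finset.univ, map_sum,
      Finset.mul_sum]
    refine Finset.sum_congr rfl fun k _ => ?_
    simp only [hcdef, Complex.conj_ofReal, ← Complex.ofReal_mul, RCLike.ofReal_re, RCLike.re_to_complex, Complex.ofReal_re]
    ring
  refine ⟨hnorm, ?_⟩
  rw [Real.sq_sqrt (Finset.sum_nonneg fun i _ => sq_nonneg _)]
  ring
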